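/- For every c > 0, the double integral ∫₀¹∫₀¹ (1 − u)·(1 − v)·exp(−c·(u + v − u·v)) du dv equals (1 − e^{−c}·(1 + ∫₀^c (eᵗ − 1)/t dt)) / c². -/

import Mathlib

open Real MeasureTheory intervalIntegral

lemma inner_eval (c : ℝ) (hc : 0 < c) (u : ℝ) (hu : u < 1) :
    (∫ v in (0:ℝ)..1, (1 - u) * (1 - v) * Real.exp (-c * (u + v - u * v)))
      = (c * Real.exp (-(c*u)) + (Real.exp (-c) - Real.exp (-(c*u))) / (1-u)) / c^2 := by
  have hu1 : (0:ℝ) < 1 - u := by linarith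
  have ha : c * (1 - u) ≠ 0 := by positivity
  set a := c * (1 - u) with ha_def
  have hderiv : ∀ v ∈ Set.uIcc (0:ℝ) 1,
      HasDerivAt (fun v => (1-u) * Real.exp (-(c*u)) *
          (Real.exp (-a * v) * (v/a + (1-a)/a^2)))
        ((1 - u) * (1 - v) * Real.exp (-c * (u + v - u * v))) v := by
    intro v _
    have h1 : HasDerivAt (fun v : ℝ => -a * v) (-a) v := by
      simpa using (hasDerivAt_id v).const_mul (-a)
    have h2 : HasDerivAt (fun v : ℝ => v / a + (1-a)/a^2) (1/a) v := by
      simpa using ((hasDerivAt_id v).div_const a).add_const ((1-a)/a^2)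
    have h3 := (h1.exp.mul h2).const_mul ((1-u) * Real.exp (-(c*u)))
    refine h3.congr_deriv ?_
    have hexp : Real.exp (-c * (u + v - u * v)) = Real.exp (-(c*u)) * Real.exp (-a * v) := by
      rw [← Real.exp_add]; congr 1; rw [ha_def]; ring
    rw [hexp]
    field_simp
    ring
  have hint : IntervalIntegrable
      (fun v => (1 - u) * (1 - v) * Real.exp (-c * (u + v - u * v))) volume 0 1 := by
    apply Continuous.intervalIntegrable
    fun_prop
  rw [intervalIntegral.integral_eq_sub_of_hasDerivAt hderiv hint]
  have key : Real.exp (-(c*u)) * Real.exp (-a) = Real.exp (-c) := by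
    rw [← Real.exp_add]; congr 1; rw [ha_def]; ring
  rw [ha_def] at *
  field_simp
  simp only [mul_zero, neg_zero, Real.exp_zero]
  rw [mul_comm u c, mul_comm (1-u) c]
  linear_combination key

lemma g_integrable (c : ℝ) (hc : 0 < c) :
    IntervalIntegrable (fun t => (Real.exp t - 1) / t) volume 0 c := by
  rw [intervalIntegrable_iff_integrableOn_Ioc_of_le hc.le]
  apply Measure.integrableOn_of_bounded (M := Real.exp c)
  · simp
  · exact ((Real.continuous_exp.sub continuous_const).measurable.div
      measurable_id).aestronglyMeasurable
  · filter_upwards [ae_restrict_mem measurableSet_Ioc] with t ht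
    obtain ⟨ht0, htc⟩ := ht
    have h1 : 1 ≤ Real.exp (-t) + t := by
      have := Real.add_one_le_exp (-t); linarith
    have h2 : Real.exp (-t) * Real.exp t = 1 := by rw [← Real.exp_add]; simp
    have h3 : Real.exp t ≤ Real.exp c := Real.exp_le_exp.2 htc
    have h4 : (1:ℝ) ≤ Real.exp t := by simpa using Real.exp_le_exp.2 ht0.le
    have hnum : Real.exp t - 1 ≤ t * Real.exp c := by
      nlinarith [Real.exp_pos t]
    rw [Real.norm_eq_abs, abs_of_nonneg (div_nonneg (by linarith) ht0.le)]
    rw [div_le_iff₀ ht0]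
    linarith

theorem matern_close_points_limit (c : ℝ) (hc : 0 < c) :
    (∫ u in (0:ℝ)..1, ∫ v in (0:ℝ)..1,
        (1 - u) * (1 - v) * Real.exp (-c * (u + v - u * v))) =
      (1 - Real.exp (-c) * (1 + ∫ t in (0:ℝ)..c, (Real.exp t - 1) / t)) / c ^ 2 := by
  have h1 : ∀ᵐ x : ℝ, x ≠ (1:ℝ) := by
    rw [MeasureTheory.ae_iff]
    simpa using Real.volume_singleton (x := (1:ℝ))
  have hcong : (∫ u in (0:ℝ)..1, ∫ v in (0:ℝ)..1,
        (1 - u) * (1 - v) * Real.exp (-c * (u + v - u * v)))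
      = ∫ u in (0:ℝ)..1,
        (c * Real.exp (-(c*u)) + (Real.exp (-c) - Real.exp (-(c*u))) / (1-u)) / c^2 := by
    apply intervalIntegral.integral_congr_ae
    filter_upwards [h1] with x hx hx'
    rw [Set.uIoc_of_le (by norm_num : (0:ℝ) ≤ 1)] at hx'
    exact inner_eval c hc x (lt_of_le_of_ne hx'.2 hx)
  rw [hcong, intervalIntegral.integral_div]
  -- pointwise rewrite of the second term
  have heq : (fun u : ℝ => (Real.exp (-c) - Real.exp (-(c*u))) / (1-u))
      = fun u => -(c * Real.exp (-c)) * ((Real.exp (c - c*u) - 1) / (c - c*u)) := by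
    funext u
    rcases eq_or_ne u 1 with rfl | hu
    · norm_num
    · have h1u : (1:ℝ) - u ≠ 0 := sub_ne_zero.2 (Ne.symm hu)
      have ht : c - c*u ≠ 0 := by
        have h' : c - c*u = c*(1-u) := by ring
        rw [h']; exact mul_ne_zero hc.ne' h1u
      have key : Real.exp (-c) * Real.exp (c - c*u) = Real.exp (-(c*u)) := by
        rw [← Real.exp_add]; congr 1; ring
      have key' : Real.exp (-c) * Real.exp (c*(1-u)) = Real.exp (-(c*u)) := by
        rw [← Real.exp_add]; congr 1; ring
      field_simp
      linear_combination key'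
  have hterm2_int : IntervalIntegrable
      (fun u => (Real.exp (-c) - Real.exp (-(c*u))) / (1-u)) volume 0 1 := by
    rw [heq]
    have s1 := (g_integrable c hc).comp_sub_left c
    have s2 := (s1.comp_mul_left (c := c)).symm.const_mul (-(c * Real.exp (-c)))
    have e0 : (c - c) / c = 0 := by field_simp; ring
    have e1 : (c - 0) / c = 1 := by field_simp; ring
    rw [e0, e1] at s2
    exact s2
  have hterm1_int : IntervalIntegrable (fun u : ℝ => c * Real.exp (-(c*u))) volume 0 1 := by
    apply Continuous.intervalIntegrable; fun_prop
  rw [intervalIntegral.integral_add hterm1_int hterm2_int]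
  -- first integral
  have hI1 : (∫ u in (0:ℝ)..1, c * Real.exp (-(c*u))) = 1 - Real.exp (-c) := by
    have hd : ∀ u ∈ Set.uIcc (0:ℝ) 1,
        HasDerivAt (fun u => -Real.exp (-(c*u))) (c * Real.exp (-(c*u))) u := by
      intro u _
      have h1 : HasDerivAt (fun u : ℝ => -(c*u)) (-c) u := by
        simpa using (hasDerivAt_id u).const_mul (-c)
      have := h1.exp.neg
      exact this.congr_deriv (by ring)
    rw [intervalIntegral.integral_eq_sub_of_hasDerivAt hd hterm1_int]
    simp
    ring
  -- second integral
  have hI2 : (∫ u in (0:ℝ)..1, (Real.exp (-c) - Real.exp (-(c*u))) / (1-u))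
      = -(Real.exp (-c)) * ∫ t in (0:ℝ)..c, (Real.exp t - 1) / t := by
    rw [heq]
    rw [intervalIntegral.integral_const_mul]
    have hsub : (∫ u in (0:ℝ)..1, (Real.exp (c - c*u) - 1) / (c - c*u))
        = c⁻¹ • ∫ x in (0:ℝ)..c, (Real.exp (c - x) - 1) / (c - x) := by
      have := intervalIntegral.integral_comp_mul_left
        (fun x => (Real.exp (c - x) - 1) / (c - x)) hc.ne' (a := 0) (b := 1)
      simpa using this
    rw [hsub]
    have hsub2 : (∫ x in (0:ℝ)..c, (Real.exp (c - x) - 1) / (c - x))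
        = ∫ t in (0:ℝ)..c, (Real.exp t - 1) / t := by
      have := intervalIntegral.integral_comp_sub_left
        (fun t => (Real.exp t - 1) / t) c (a := 0) (b := c)
      simpa using this
    rw [hsub2]
    rw [smul_eq_mul]
    field_simp
  rw [hI1, hI2]
  field_simp
  ring
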